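/- In the Lie algebra W(1) with bracket [L_{i,m}, L_{j,n}] = (j−i)L_{i+j,m+n} + (m−n)L_{i+j,m+n−1}, the set {L_{i,0}, L_{i,1} : i ∈ ℤ} generates W(1) as a Lie algebra. -/
import Mathlib


/-- The bracket of `W(1)` on the free vector space with basis `{L_{i,m} : i ∈ ℤ, m ∈ ℕ}`:
`[L_{i,m}, L_{j,n}] = (j-i) L_{i+j,m+n} + (m-n) L_{i+j,m+n-1}`. -/
noncomputable def W1bracket (x y : (ℤ × ℕ) →₀ ℂ) : (ℤ × ℕ) →₀ ℂ :=
  x.sum fun p a => y.sum fun q b =>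
    (a * b) • (((q.1 - p.1 : ℤ) : ℂ) • Finsupp.single (p.1 + q.1, p.2 + q.2) (1 : ℂ) +
      (((p.2 : ℤ) - (q.2 : ℤ) : ℤ) : ℂ) • Finsupp.single (p.1 + q.1, p.2 + q.2 - 1) (1 : ℂ))

lemma W1bracket_single (p q : ℤ × ℕ) :
    W1bracket (Finsupp.single p 1) (Finsupp.single q 1) =
      ((q.1 - p.1 : ℤ) : ℂ) • Finsupp.single (p.1 + q.1, p.2 + q.2) (1 : ℂ) +
      (((p.2 : ℤ) - (q.2 : ℤ) : ℤ) : ℂ) • Finsupp.single (p.1 + q.1, p.2 + q.2 - 1) (1 : ℂ) := by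
  unfold W1bracket
  rw [Finsupp.sum_single_index, Finsupp.sum_single_index] <;> simp

/-- Membership in the Lie subalgebra of `W(1)` generated by the elements
`L_{i,0}` and `L_{i,1}` (`i ∈ ℤ`): closed under scalar multiples, sums and brackets. -/
inductive W1gen : ((ℤ × ℕ) →₀ ℂ) → Prop
  | base0 (i : ℤ) : W1gen (Finsupp.single (i, 0) 1)
  | base1 (i : ℤ) : W1gen (Finsupp.single (i, 1) 1)
  | smul (c : ℂ) {x : (ℤ × ℕ) →₀ ℂ} : W1gen x → W1gen (c • x)
  | add {x y : (ℤ × ℕ) →₀ ℂ} : W1gen x → W1gen y → W1gen (x + y)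
  | br {x y : (ℤ × ℕ) →₀ ℂ} : W1gen x → W1gen y → W1gen (W1bracket x y)

/-- The inductive step: from all `L_{k,m}` (and the generators `L_{j,1}`) we obtain
`L_{i,m+1}`, using `[L_{j,1}, L_{k,m}] = (k-j) L_{j+k,m+1} + (1-m) L_{j+k,m}`. -/
lemma W1gen_step (m : ℕ) (h : ∀ k : ℤ, W1gen (Finsupp.single (k, m) 1)) (i : ℤ) :
    W1gen (Finsupp.single (i, m + 1) 1) := by
  obtain ⟨j, k, hjk, hne⟩ : ∃ j k : ℤ, j + k = i ∧ k ≠ j := by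
    rcases eq_or_ne i 0 with rfl | hi
    · exact ⟨-1, 1, by ring, by decide⟩
    · exact ⟨0, i, by ring, hi⟩
  have hb : W1gen (W1bracket (Finsupp.single (j, 1) 1) (Finsupp.single (k, m) 1) +
      (-(((1 : ℤ) - (m : ℤ) : ℤ) : ℂ)) • Finsupp.single (i, m) 1) :=
    (W1gen.br (W1gen.base1 j) (h k)).add (W1gen.smul _ (h i))
  have := W1gen.smul (((k - j : ℤ) : ℂ))⁻¹ hb
  have hkj : ((k - j : ℤ) : ℂ) ≠ 0 := by
    exact_mod_cast sub_ne_zero.mpr (by exact_mod_cast hne)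
  rw [W1bracket_single] at this
  simp only [hjk] at this
  convert this using 1
  rw [smul_add, smul_add, smul_smul, smul_smul, smul_smul,
    inv_mul_cancel₀ hkj]
  simp only [one_smul]
  have : 1 + m - 1 = m := by omega
  rw [this, add_assoc, ← add_smul]
  ring_nf
  simp [Nat.add_comm]

/-- `{L_{i,0}, L_{i,1} : i ∈ ℤ}` generates `W(1)` as a Lie algebra:
every basis element `L_{i,m}` lies in the Lie subalgebra they generate. -/
theorem stmt_9 : ∀ (i : ℤ) (m : ℕ), W1gen (Finsupp.single (i, m) 1) := by
  intro i m
  induction m generalizing i with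
  | zero => exact W1gen.base0 i
  | succ m ih => exact W1gen_step m ih i
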